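/- Under the hypotheses of the previous identity, the shell-crossing existence condition m|∂_R α|/∂_R m ≥ 2√Δ/3 at R₁ is equivalent to |δϱ₁|/ϱ₁ ≥ 2√((ϱ̄₁/ρ_c)(1 - ϱ̄₁/ρ_c)). -/

import Mathlib

open Real

theorem shell_crossing_condition_equivalent
    (G Δ t₀ R₁ : ℝ) (hG : 0 < G) (hΔ : 0 < Δ) (hR₁ : 0 < R₁)
    (m : ℝ → ℝ) (hm : Differentiable ℝ m)
    (hmpos : 0 < m R₁) (hdm : 0 < deriv m R₁)
    (ρc avg loc dloc : ℝ)
    (hρc : ρc = 3 / (8 * Real.pi * G * Δ))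
    (havg : avg = 3 * m R₁ / (4 * Real.pi * R₁ ^ 3))
    (hloc : loc = deriv m R₁ / (4 * Real.pi * R₁ ^ 2))
    (hdloc : dloc = loc - avg)
    (havg_pos : 0 < avg) (havg_lt : avg < ρc)
    (α : ℝ → ℝ)
    (hα : ∀ R, α R = t₀ + Real.sqrt ((4 / 9) * (R ^ 3 / (2 * G * m R) - Δ))) :
    m R₁ * |deriv α R₁| / deriv m R₁ ≥ 2 * Real.sqrt Δ / 3 ↔
      |dloc| / loc ≥ 2 * Real.sqrt ((avg / ρc) * (1 - avg / ρc)) := by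
  have hπ := Real.pi_pos
  set M := m R₁ with hMdef
  set M' := deriv m R₁ with hM'def
  -- key inequality 2GΔM < R₁³
  have hkey : 2 * G * Δ * M < R₁ ^ 3 := by
    have h := havg_lt
    rw [havg, hρc, div_lt_div_iff₀ (by positivity) (by positivity)] at h
    nlinarith [Real.pi_pos, pow_pos hR₁ 3]
  have hMne : (2 * G * M) ≠ 0 := by positivity
  set w := (R₁ ^ 3 - 2 * G * Δ * M) / (2 * G * M) with hwdef
  have hw : 0 < w := div_pos (by linarith) (by positivity)
  have harg : R₁ ^ 3 / (2 * G * M) - Δ = w := by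
    rw [hwdef]; field_simp
  have hfpos : 0 < (4 / 9) * (R₁ ^ 3 / (2 * G * M) - Δ) := by
    rw [harg]; positivity
  set s := Real.sqrt w with hsdef
  have hs : 0 < s := Real.sqrt_pos.2 hw
  have hs2 : s ^ 2 = w := Real.sq_sqrt hw.le
  -- sqrt of f R₁
  have hsqf : Real.sqrt ((4 / 9) * (R₁ ^ 3 / (2 * G * M) - Δ)) = (2 / 3) * s := by
    rw [harg, Real.sqrt_mul (by norm_num) w,
      show (4 : ℝ) / 9 = (2 / 3) ^ 2 by norm_num, Real.sqrt_sq (by norm_num)]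
  -- derivative of α at R₁
  have hd1 : HasDerivAt (fun R => R ^ 3 / (2 * G * m R))
      ((3 * R₁ ^ 2 * (2 * G * M) - R₁ ^ 3 * (2 * G * M')) / (2 * G * M) ^ 2) R₁ := by
    have hp : HasDerivAt (fun R : ℝ => R ^ 3) (3 * R₁ ^ 2) R₁ := by
      simpa using hasDerivAt_pow 3 R₁
    have hq : HasDerivAt (fun R => 2 * G * m R) (2 * G * M') R₁ :=
      ((hm R₁).hasDerivAt).const_mul (2 * G)
    exact hp.div hq hMne
  have hd2 : HasDerivAt (fun R => (4 / 9) * (R ^ 3 / (2 * G * m R) - Δ))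
      ((4 / 9) * ((3 * R₁ ^ 2 * (2 * G * M) - R₁ ^ 3 * (2 * G * M')) / (2 * G * M) ^ 2)) R₁ :=
    (hd1.sub_const Δ).const_mul (4 / 9)
  have hd3 : HasDerivAt α
      (1 / (2 * Real.sqrt ((4 / 9) * (R₁ ^ 3 / (2 * G * M) - Δ))) *
        ((4 / 9) * ((3 * R₁ ^ 2 * (2 * G * M) - R₁ ^ 3 * (2 * G * M')) / (2 * G * M) ^ 2))) R₁ := by
    have hαfun : α = fun R => t₀ + Real.sqrt ((4 / 9) * (R ^ 3 / (2 * G * m R) - Δ)) :=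
      funext hα
    rw [hαfun]
    exact ((Real.hasDerivAt_sqrt (ne_of_gt hfpos)).comp R₁ hd2).const_add t₀
  have hD : deriv α R₁ = (3 * R₁ ^ 2 * M - R₁ ^ 3 * M') / (6 * G * M ^ 2 * s) := by
    rw [hd3.deriv, hsqf]
    field_simp
    ring
  -- absolute value of the derivative
  have h6 : (0:ℝ) < 6 * G * M ^ 2 * s :=
    mul_pos (mul_pos (mul_pos (by norm_num) hG) (pow_pos hmpos 2)) hs
  have habsD : |deriv α R₁| = |3 * R₁ ^ 2 * M - R₁ ^ 3 * M'| / (6 * G * M ^ 2 * s) := by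
    rw [hD, abs_div, abs_of_pos h6]
  -- LHS expression
  have hLHS : M * |deriv α R₁| / M' = |3 * R₁ ^ 2 * M - R₁ ^ 3 * M'| / (6 * G * M * M' * s) := by
    rw [habsD]; field_simp
  -- RHS expressions
  have hdloc' : dloc = (R₁ * M' - 3 * M) / (4 * Real.pi * R₁ ^ 3) := by
    rw [hdloc, hloc, havg]; field_simp
  have hRHS1 : |dloc| / loc = |R₁ * M' - 3 * M| / (R₁ * M') := by
    rw [hdloc', hloc, abs_div, abs_of_pos (show (0:ℝ) < 4 * Real.pi * R₁ ^ 3 by positivity)]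
    field_simp
  have hprod : (avg / ρc) * (1 - avg / ρc) = (2 * G * M * s * Real.sqrt Δ / R₁ ^ 3) ^ 2 := by
    have hΔs : Real.sqrt Δ ^ 2 = Δ := Real.sq_sqrt hΔ.le
    have hratio : avg / ρc = 2 * G * Δ * M / R₁ ^ 3 := by
      rw [havg, hρc]; field_simp; ring
    have hwval : 2 * G * M * w = R₁ ^ 3 - 2 * G * Δ * M := by
      rw [hwdef]; field_simp
    rw [hratio]
    have e1 : (2 * G * M * s * Real.sqrt Δ / R₁ ^ 3) ^ 2 =
        (2 * G * M * w) * (2 * G * M) * Δ / R₁ ^ 6 := by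
      rw [show (2 * G * M * s * Real.sqrt Δ / R₁ ^ 3) ^ 2 =
        (2 * G * M * s ^ 2) * (2 * G * M) * Real.sqrt Δ ^ 2 / R₁ ^ 6 from by ring, hs2, hΔs]
    rw [e1, hwval]
    field_simp
  have hsqrtprod : Real.sqrt ((avg / ρc) * (1 - avg / ρc)) =
      2 * G * M * s * Real.sqrt Δ / R₁ ^ 3 := by
    have : (0:ℝ) ≤ 2 * G * M * s * Real.sqrt Δ / R₁ ^ 3 := by
      apply div_nonneg _ (by positivity)
      exact mul_nonneg (mul_nonneg (by positivity) hs.le) (Real.sqrt_nonneg Δ)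
    rw [hprod, Real.sqrt_sq this]
  -- reduce both sides to the same inequality
  have h6' : (0:ℝ) < 6 * G * M * M' * s :=
    mul_pos (mul_pos (mul_pos (mul_pos (by norm_num) hG) hmpos) hdm) hs
  rw [hLHS, hRHS1, hsqrtprod, ge_iff_le, ge_iff_le,
    div_le_div_iff₀ (by norm_num) h6',
    show (2 : ℝ) * (2 * G * M * s * Real.sqrt Δ / R₁ ^ 3) =
      (4 * G * M * s * Real.sqrt Δ) / R₁ ^ 3 by ring,
    div_le_div_iff₀ (by positivity) (by positivity)]
  have habseq : |3 * R₁ ^ 2 * M - R₁ ^ 3 * M'| = R₁ ^ 2 * |R₁ * M' - 3 * M| := by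
    rw [show 3 * R₁ ^ 2 * M - R₁ ^ 3 * M' = -(R₁ ^ 2 * (R₁ * M' - 3 * M)) by ring,
      abs_neg, abs_mul, abs_of_pos (by positivity)]
  rw [habseq]
  constructor
  · intro h
    have h2 := mul_le_mul_of_nonneg_right h hR₁.le
    linarith [h2]
  · intro h
    rw [← mul_le_mul_iff_of_pos_right hR₁]
    linarith [h]
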